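/- Let N ≥ 1, α ∈ (0,1), R > 0 and k₁, k₂ ≥ 0. Let μ be a finite Borel measure on ℝ^N, supported in the closed ball of radius R centered at the origin, with total mass μ(ℝ^N) ≤ 1, and suppose that for every y ∈ (0,R] one has μ({x ∈ ℝ^N : |x| ≥ y}) ≤ k₁/y² + k₂/y. Then ∫_{ℝ^N} |x|^α dμ(x) ≤ (α/(2−α)) k₁^{α/2} + k₁^{α/2} + (α/(1−α)) k₂^α + k₂^α. -/

import Mathlib

open MeasureTheory Set Metric

lemma min_one_add_le {a b : ℝ} (ha : 0 ≤ a) (hb : 0 ≤ b) :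
    min 1 (a + b) ≤ min 1 a + min 1 b := by
  rcases le_total (a + b) 1 with h | h
  · rw [min_eq_right h, min_eq_right (by linarith), min_eq_right (by linarith)]
  · have h1 : min 1 (a + b) ≤ 1 := min_le_left _ _
    rcases le_total a 1 with h2 | h2
    · rcases le_total b 1 with h3 | h3
      · rw [min_eq_right h2, min_eq_right h3]; linarith
      · rw [min_eq_left h3]
        have : 0 ≤ min 1 a := le_min zero_le_one ha
        linarith
    · rw [min_eq_left h2]
      have : 0 ≤ min 1 b := le_min zero_le_one hb
      linarith

lemma min_one_div_rpow_integral (c p : ℝ) (hc : 0 ≤ c) (hp : 1 < p) :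
    IntegrableOn (fun t : ℝ => min 1 (c / t ^ p)) (Ioi (0 : ℝ)) ∧
      ∫ t in Ioi (0 : ℝ), min 1 (c / t ^ p) = c ^ (1 / p) + 1 / (p - 1) * c ^ (1 / p) := by
  rcases eq_or_lt_of_le hc with rfl | hc
  · have hfun : (fun t : ℝ => min 1 ((0:ℝ) / t ^ p)) = fun _ => (0 : ℝ) := by
      funext t; simp
    rw [hfun, Real.zero_rpow (by positivity : 1 / p ≠ 0)]
    refine ⟨integrableOn_zero, by simp⟩
  · set T : ℝ := c ^ (1 / p) with hT
    have hT0 : 0 < T := Real.rpow_pos_of_pos hc _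
    have hTp : T ^ p = c := by
      rw [hT, one_div, Real.rpow_inv_rpow hc.le (by linarith : p ≠ 0)]
    have hsplit : Ioc (0 : ℝ) T ∪ Ioi T = Ioi 0 := Ioc_union_Ioi_eq_Ioi hT0.le
    -- on Ioc 0 T the function is 1
    have hEq1 : EqOn (fun t : ℝ => min 1 (c / t ^ p)) (fun _ => (1 : ℝ)) (Ioc 0 T) := by
      intro t ht
      have htp : (0 : ℝ) < t ^ p := Real.rpow_pos_of_pos ht.1 _
      have hle : t ^ p ≤ c := by
        rw [← hTp]; exact Real.rpow_le_rpow ht.1.le ht.2 (by linarith)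
      simp only
      rw [min_eq_left ((one_le_div htp).mpr hle)]
    -- on Ioi T the function is c * t ^ (-p)
    have hEq2 : EqOn (fun t : ℝ => min 1 (c / t ^ p)) (fun t => c * t ^ (-p)) (Ioi T) := by
      intro t ht
      have ht0 : (0 : ℝ) < t := lt_trans hT0 ht
      have htp : (0 : ℝ) < t ^ p := Real.rpow_pos_of_pos ht0 _
      have hle : c ≤ t ^ p := by
        rw [← hTp]; exact Real.rpow_le_rpow hT0.le (le_of_lt ht) (by linarith)
      simp only
      rw [min_eq_right ((div_le_one htp).mpr hle), Real.rpow_neg ht0.le, div_eq_mul_inv]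
    have hInt1 : IntegrableOn (fun t : ℝ => min 1 (c / t ^ p)) (Ioc 0 T) :=
      (integrableOn_const (C := (1:ℝ)) (by simp : (volume : Measure ℝ) (Ioc 0 T) ≠ ⊤)).congr_fun
        hEq1.symm measurableSet_Ioc
    have hbase : IntegrableOn (fun t : ℝ => c * t ^ (-p)) (Ioi T) :=
      (integrableOn_Ioi_rpow_of_lt (by linarith : -p < -1) hT0).const_mul c
    have hInt2 : IntegrableOn (fun t : ℝ => min 1 (c / t ^ p)) (Ioi T) :=
      hbase.congr_fun hEq2.symm measurableSet_Ioi
    have hV1 : ∫ t in Ioc (0 : ℝ) T, min 1 (c / t ^ p) = T := by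
      rw [setIntegral_congr_fun measurableSet_Ioc hEq1]
      simp [Real.volume_Ioc, hT0.le]
    have hV2 : ∫ t in Ioi T, min 1 (c / t ^ p) = 1 / (p - 1) * T := by
      rw [setIntegral_congr_fun measurableSet_Ioi hEq2, integral_const_mul,
        integral_Ioi_rpow_of_lt (by linarith : -p < -1) hT0]
      have h1 : T ^ p * T ^ (-p + 1) = T := by
        rw [← Real.rpow_add hT0]
        norm_num
      have hp1 : (-p + 1) ≠ 0 := by linarith
      have hp2 : (p - 1) ≠ 0 := by linarith
      calc c * (-T ^ (-p + 1) / (-p + 1)) = -(T ^ p * T ^ (-p + 1)) / (-p + 1) := by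
              rw [← hTp]; ring
        _ = -T / (-p + 1) := by rw [h1]
        _ = 1 / (p - 1) * T := by field_simp; ring
    constructor
    · rw [← hsplit]; exact hInt1.union hInt2
    · rw [← hsplit, setIntegral_union (Ioc_disjoint_Ioi le_rfl) measurableSet_Ioi hInt1 hInt2,
        hV1, hV2]

/-- **α-moment bound from tail estimates** (core of Lemma A.1): if `μ` is a finite
Borel measure supported in `closedBall 0 R` with total mass at most `1` whose tails
satisfy `μ{|x| ≥ y} ≤ k₁/y² + k₂/y` for `0 < y ≤ R`, then
`∫ |x|^α dμ ≤ (α/(2-α)) k₁^{α/2} + k₁^{α/2} + (α/(1-α)) k₂^α + k₂^α`. -/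
theorem moment_bound_from_tails
    (N : ℕ) (hN : 1 ≤ N) (α : ℝ) (hα0 : 0 < α) (hα1 : α < 1)
    (R : ℝ) (hR : 0 < R) (k₁ k₂ : ℝ) (hk₁ : 0 ≤ k₁) (hk₂ : 0 ≤ k₂)
    (μ : Measure (EuclideanSpace ℝ (Fin N))) [IsFiniteMeasure μ]
    (hsupp : μ (closedBall (0 : EuclideanSpace ℝ (Fin N)) R)ᶜ = 0)
    (hmass : μ univ ≤ 1)
    (htail : ∀ y : ℝ, y ∈ Ioc (0 : ℝ) R →
      μ {x : EuclideanSpace ℝ (Fin N) | y ≤ ‖x‖} ≤ ENNReal.ofReal (k₁ / y ^ 2 + k₂ / y)) :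
    ∫ x, ‖x‖ ^ α ∂μ
      ≤ α / (2 - α) * k₁ ^ (α / 2) + k₁ ^ (α / 2) + α / (1 - α) * k₂ ^ α + k₂ ^ α := by
  have hαne : α ≠ 0 := ne_of_gt hα0
  have hcont : Continuous fun x : EuclideanSpace ℝ (Fin N) => ‖x‖ ^ α :=
    continuous_norm.rpow_const fun x => Or.inr hα0.le
  have hae : ∀ᵐ x ∂μ, x ∈ closedBall (0 : EuclideanSpace ℝ (Fin N)) R := by
    rw [ae_iff]
    exact hsupp
  have hint : Integrable (fun x : EuclideanSpace ℝ (Fin N) => ‖x‖ ^ α) μ := by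
    refine ⟨hcont.aestronglyMeasurable, HasFiniteIntegral.of_bounded (C := R ^ α) ?_⟩
    filter_upwards [hae] with x hx
    rw [Real.norm_eq_abs, abs_of_nonneg (Real.rpow_nonneg (norm_nonneg x) α)]
    exact Real.rpow_le_rpow (norm_nonneg x)
      (by simpa [mem_closedBall, dist_zero_right] using hx) hα0.le
  have hnn : 0 ≤ᵐ[μ] fun x : EuclideanSpace ℝ (Fin N) => ‖x‖ ^ α :=
    Filter.Eventually.of_forall fun x => Real.rpow_nonneg (norm_nonneg x) α
  rw [hint.integral_eq_integral_meas_lt hnn]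
  obtain ⟨hI1, hV1⟩ := min_one_div_rpow_integral k₁ (2 / α) hk₁
    ((one_lt_div hα0).mpr (by linarith))
  obtain ⟨hI2, hV2⟩ := min_one_div_rpow_integral k₂ (1 / α) hk₂
    ((one_lt_div hα0).mpr hα1)
  have hIadd : IntegrableOn
      (fun t : ℝ => min 1 (k₁ / t ^ ((2:ℝ) / α)) + min 1 (k₂ / t ^ ((1:ℝ) / α)))
      (Ioi (0 : ℝ)) := hI1.add hI2
  have hbound : ∀ t ∈ Ioi (0 : ℝ),
      (μ {x : EuclideanSpace ℝ (Fin N) | t < ‖x‖ ^ α}).toReal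
        ≤ min 1 (k₁ / t ^ ((2:ℝ) / α)) + min 1 (k₂ / t ^ ((1:ℝ) / α)) := by
    intro t ht
    rw [mem_Ioi] at ht
    set y : ℝ := t ^ ((1:ℝ) / α) with hy
    have hy0 : 0 < y := Real.rpow_pos_of_pos ht _
    have hy2 : t ^ ((2:ℝ) / α) = y ^ 2 := by
      rw [show (2:ℝ) / α = 1 / α * 2 by ring, Real.rpow_mul ht.le,
        show ((2:ℝ)) = ((2:ℕ) : ℝ) by norm_num, Real.rpow_natCast]
    have hsub : {x : EuclideanSpace ℝ (Fin N) | t < ‖x‖ ^ α}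
        ⊆ {x : EuclideanSpace ℝ (Fin N) | y ≤ ‖x‖} := by
      intro x hx
      have hx' : t < ‖x‖ ^ α := hx
      have := Real.rpow_lt_rpow ht.le hx' (by positivity : (0:ℝ) < 1 / α)
      rw [one_div, Real.rpow_rpow_inv (norm_nonneg x) hαne] at this
      rw [hy, one_div] at *
      exact le_of_lt this
    rcases le_or_gt y R with hyR | hyR
    · have h1 := htail y ⟨hy0, hyR⟩
      have hμ1 : (μ {x : EuclideanSpace ℝ (Fin N) | t < ‖x‖ ^ α}).toReal
          ≤ k₁ / y ^ 2 + k₂ / y := by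
        refine ENNReal.toReal_le_of_le_ofReal (by positivity) ?_
        exact le_trans (measure_mono hsub) h1
      have hμ2 : (μ {x : EuclideanSpace ℝ (Fin N) | t < ‖x‖ ^ α}).toReal ≤ 1 := by
        refine ENNReal.toReal_le_of_le_ofReal zero_le_one ?_
        rw [ENNReal.ofReal_one]
        exact le_trans (measure_mono (subset_univ _)) hmass
      calc (μ {x : EuclideanSpace ℝ (Fin N) | t < ‖x‖ ^ α}).toReal
          ≤ min 1 (k₁ / y ^ 2 + k₂ / y) := le_min hμ2 hμ1
        _ ≤ min 1 (k₁ / y ^ 2) + min 1 (k₂ / y) :=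
            min_one_add_le (by positivity) (by positivity)
        _ = min 1 (k₁ / t ^ ((2:ℝ) / α)) + min 1 (k₂ / t ^ ((1:ℝ) / α)) := by
            rw [hy2, hy]
    · have hnull : μ {x : EuclideanSpace ℝ (Fin N) | t < ‖x‖ ^ α} = 0 := by
        refine measure_mono_null (hsub.trans ?_) hsupp
        intro x hx
        simp only [mem_compl_iff, mem_closedBall, dist_zero_right, not_le]
        exact lt_of_lt_of_le hyR hx
      rw [hnull]
      have h1 : (0:ℝ) ≤ min 1 (k₁ / t ^ ((2:ℝ) / α)) := le_min zero_le_one (by positivity)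
      have h2 : (0:ℝ) ≤ min 1 (k₂ / t ^ ((1:ℝ) / α)) := le_min zero_le_one (by positivity)
      simp only [ENNReal.toReal_zero]
      linarith
  have hmono : ∫ t in Ioi (0:ℝ),
        (μ {x : EuclideanSpace ℝ (Fin N) | t < ‖x‖ ^ α}).toReal
      ≤ ∫ t in Ioi (0:ℝ),
        (min 1 (k₁ / t ^ ((2:ℝ) / α)) + min 1 (k₂ / t ^ ((1:ℝ) / α))) := by
    refine integral_mono_of_nonneg
      (Filter.Eventually.of_forall fun t => ENNReal.toReal_nonneg) hIadd ?_
    filter_upwards [ae_restrict_mem measurableSet_Ioi] with t ht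
    exact hbound t ht
  have hval : ∫ t in Ioi (0:ℝ),
      (min 1 (k₁ / t ^ ((2:ℝ) / α)) + min 1 (k₂ / t ^ ((1:ℝ) / α)))
      = (k₁ ^ (1 / (2 / α)) + 1 / (2 / α - 1) * k₁ ^ (1 / (2 / α)))
        + (k₂ ^ (1 / (1 / α)) + 1 / (1 / α - 1) * k₂ ^ (1 / (1 / α))) := by
    rw [integral_add hI1 hI2, hV1, hV2]
  have e1 : 1 / ((2:ℝ) / α) = α / 2 := one_div_div _ _
  have e2 : 1 / ((1:ℝ) / α) = α := by rw [one_div_one_div]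
  have e3 : 1 / ((2:ℝ) / α - 1) = α / (2 - α) := by
    rw [show (2:ℝ) / α - 1 = (2 - α) / α by field_simp, one_div_div]
  have e4 : 1 / ((1:ℝ) / α - 1) = α / (1 - α) := by
    rw [show (1:ℝ) / α - 1 = (1 - α) / α by field_simp, one_div_div]
  rw [e1, e2, e3, e4] at hval
  calc ∫ t in Ioi (0:ℝ), (μ {x : EuclideanSpace ℝ (Fin N) | t < ‖x‖ ^ α}).toReal
      ≤ ∫ t in Ioi (0:ℝ),
        (min 1 (k₁ / t ^ ((2:ℝ) / α)) + min 1 (k₂ / t ^ ((1:ℝ) / α))) := hmono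
    _ = (k₁ ^ (α / 2) + α / (2 - α) * k₁ ^ (α / 2))
        + (k₂ ^ α + α / (1 - α) * k₂ ^ α) := hval
    _ = α / (2 - α) * k₁ ^ (α / 2) + k₁ ^ (α / 2) + α / (1 - α) * k₂ ^ α + k₂ ^ α := by ring
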